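/- Let g : ℝ → (0,∞) be continuous, X₁, X₂, … i.i.d. with mean μ, S_n = X₁ + ⋯ + X_n, and t_a = inf{ n ≥ 1 : n g(S_n/n) ≥ a }. If g(μ) > 0 then a / t_a → g(μ) in probability (indeed almost surely) as a → ∞. -/

import Mathlib

open MeasureTheory ProbabilityTheory Filter

lemma aux_ratio (c : ℕ → ℝ) (L : ℝ) (hL : 0 < L)
    (hc : Tendsto c atTop (nhds L))
    (t : ℝ → ℕ)
    (ht : ∀ a, t a = sInf {n : ℕ | 1 ≤ n ∧ a ≤ n * c n}) :
    Tendsto (fun a : ℝ => a / (t a : ℝ)) atTop (nhds L) := by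
  -- n * c n → ∞
  have hf : Tendsto (fun n : ℕ => (n : ℝ) * c n) atTop atTop := by
    apply tendsto_atTop_mono' atTop (f₁ := fun n : ℕ => (n : ℝ) * (L / 2))
    · filter_upwards [hc.eventually (eventually_gt_nhds (half_lt_self hL)),
        eventually_ge_atTop 0] with n hn _
      exact mul_le_mul_of_nonneg_left hn.le (Nat.cast_nonneg n)
    · exact Tendsto.atTop_mul_const (half_pos hL) tendsto_natCast_atTop_atTop
  have hne : ∀ a : ℝ, {n : ℕ | 1 ≤ n ∧ a ≤ n * c n}.Nonempty := by
    intro a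
    obtain ⟨n, hn1, hn2⟩ := ((eventually_ge_atTop 1).and (hf.eventually_ge_atTop a)).exists
    exact ⟨n, hn1, hn2⟩
  have hmem : ∀ a : ℝ, 1 ≤ t a ∧ a ≤ (t a : ℝ) * c (t a) := by
    intro a; rw [ht]; exact Nat.sInf_mem (hne a)
  have hmin : ∀ a : ℝ, ∀ m, m < t a → ¬(1 ≤ m ∧ a ≤ (m : ℝ) * c m) := by
    intro a m hm; rw [ht] at hm; exact Nat.notMem_of_lt_sInf hm
  have ttop : Tendsto t atTop atTop := by
    rw [tendsto_atTop]
    intro N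
    filter_upwards [eventually_ge_atTop (1 + ∑ n ∈ Finset.range N, |(n : ℝ) * c n|)] with a ha
    by_contra h
    push_neg at h
    have h1 := (hmem a).2
    have h2 : (t a : ℝ) * c (t a) ≤ ∑ n ∈ Finset.range N, |(n : ℝ) * c n| := by
      refine le_trans (le_abs_self _) ?_
      exact Finset.single_le_sum (f := fun n : ℕ => |(n : ℝ) * c n|) (fun i _ => abs_nonneg _) (Finset.mem_range.mpr h)
    linarith
  have hE2 : ∀ᶠ a : ℝ in atTop, 2 ≤ t a := ttop.eventually_ge_atTop 2
  -- squeeze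
  have hupper : Tendsto (fun a : ℝ => c (t a)) atTop (nhds L) := hc.comp ttop
  have hratio : Tendsto (fun n : ℕ => ((n - 1 : ℕ) : ℝ) / n) atTop (nhds 1) := by
    have : Tendsto (fun n : ℕ => 1 - 1 / (n : ℝ)) atTop (nhds (1 - 0)) :=
      tendsto_const_nhds.sub tendsto_one_div_atTop_nhds_zero_nat
    rw [sub_zero] at this
    refine this.congr' ?_
    filter_upwards [eventually_ge_atTop 1] with n hn
    have hn0 : (n : ℝ) ≠ 0 := Nat.cast_ne_zero.mpr (by omega)
    rw [Nat.cast_sub hn]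
    field_simp
    simp
  have hlow : Tendsto (fun a : ℝ => ((t a - 1 : ℕ) : ℝ) / (t a : ℝ) * c (t a - 1))
      atTop (nhds L) := by
    have h1 : Tendsto (fun n : ℕ => ((n - 1 : ℕ) : ℝ) / n * c (n - 1)) atTop
        (nhds (1 * L)) :=
      hratio.mul (hc.comp (tendsto_sub_atTop_nat 1))
    rw [one_mul] at h1
    exact h1.comp ttop
  refine tendsto_of_tendsto_of_tendsto_of_le_of_le' hlow hupper ?_ ?_
  · -- lower bound eventually
    filter_upwards [hE2] with a ha
    set n := t a with hn
    have hpos : (0 : ℝ) < (n : ℝ) := by positivity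
    have hm : ¬(1 ≤ n - 1 ∧ a ≤ ((n - 1 : ℕ) : ℝ) * c (n - 1)) := hmin a (n - 1) (by omega)
    have hm1 : 1 ≤ n - 1 := by omega
    have hlt : ((n - 1 : ℕ) : ℝ) * c (n - 1) < a := by
      by_contra hcon; push_neg at hcon; exact hm ⟨hm1, hcon⟩
    rw [div_mul_eq_mul_div]
    exact div_le_div_of_nonneg_right hlt.le hpos.le
  · filter_upwards [hE2] with a ha
    have hpos : (0 : ℝ) < (t a : ℝ) := by positivity
    rw [div_le_iff₀ hpos]
    rw [mul_comm]
    exact (hmem a).2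

/-- For i.i.d. `X_i` with mean `μ`, a continuous positive `g`, and
`t_a = inf{n ≥ 1 : n g(S_n/n) ≥ a}`: `a / t_a → g(μ)` almost surely (hence in
probability) as `a → ∞`. -/
theorem ratio_tendsto_g_mu
    {Ω : Type*} [MeasureSpace Ω] [IsProbabilityMeasure (volume : Measure Ω)]
    (X : ℕ → Ω → ℝ) (hmeas : ∀ i, StronglyMeasurable (X i))
    (hindep : iIndepFun X)
    (hident : ∀ i, IdentDistrib (X i) (X 0))
    (hint : Integrable (X 0)) (μ : ℝ) (hmean : ∫ ω, X 0 ω = μ)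
    (g : ℝ → ℝ) (hg : Continuous g) (hg0 : ∀ x, 0 < g x)
    (S : ℕ → Ω → ℝ) (hS : ∀ n ω, S n ω = ∑ i ∈ Finset.range n, X i ω)
    (t : ℝ → Ω → ℕ)
    (ht : ∀ a ω, t a ω = sInf {n : ℕ | 1 ≤ n ∧ a ≤ n * g (S n ω / n)}) :
    ∀ᵐ ω, Tendsto (fun a : ℝ => a / (t a ω : ℝ)) atTop (nhds (g μ)) := by
  have hpair : Pairwise (Function.onFun (IndepFun · · (volume : Measure Ω)) X) :=
    fun i j hij => hindep.indepFun hij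
  have hslln := strong_law_ae X hint hpair hident
  filter_upwards [hslln] with ω hω
  have hω' : Tendsto (fun n : ℕ => S n ω / n) atTop (nhds μ) := by
    rw [show μ = ∫ ω, X 0 ω from hmean.symm] at *
    apply hω.congr
    intro n
    simp [hS, smul_eq_mul, div_eq_inv_mul]
  exact aux_ratio (fun n => g (S n ω / n)) (g μ) (hg0 μ)
    ((hg.tendsto μ).comp hω') (t · ω) (fun a => ht a ω)
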